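/- Assume 2^{k/α} is not an integer for any k ≥ 1 (e.g. 1/α irrational). Let (n_j) be a strictly increasing sequence of positive integers with n_j ∉ {⌊2^{k/α}⌋ : k ∈ ℕ} for all j. Then ⌊α log₂ n_j⌋ = ⌊α log₂ (n_j + 1)⌋ for all j, hence {α log₂ n_j} − {α log₂(n_j+1)} → 0 and lim_{j→∞} (1 + 2^{{α log₂ n_j}}) / (1 + 2^{{α log₂ (n_j+1)}}) = 1. In particular, with ξ_n = (1/2) n^{−α}(1 + 2^{{α log₂ n}}), one has ξ_{n_j}/ξ_{n_j+1} → 1: the 'derivative at 0 along the subsequence' equals 1. -/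

import Mathlib

open Set Filter Topology Real

/-- If `2^{k/α}` is never an integer for `k ≥ 1`, and `(n_j)` is a strictly
increasing sequence of positive integers avoiding `{⌊2^{k/α}⌋ : k ≥ 1}`, then
`⌊α log₂ n_j⌋ = ⌊α log₂ (n_j+1)⌋` for all `j`, hence
`{α log₂ n_j} − {α log₂(n_j+1)} → 0`,
`(1 + 2^{{α log₂ n_j}})/(1 + 2^{{α log₂ (n_j+1)}}) → 1`, and with
`ξ_n = (1/2) n^(−α)(1 + 2^{{α log₂ n}})` one has `ξ_{n_j}/ξ_{n_j+1} → 1`. -/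
theorem stmt_17 (α : ℝ) (hα0 : 0 < α) (hα1 : α < 1)
    (hnotint : ∀ k : ℕ, 1 ≤ k → ¬ ∃ m : ℤ, (2 : ℝ) ^ ((k : ℝ) / α) = (m : ℝ))
    (n : ℕ → ℕ) (hmono : StrictMono n) (hpos : ∀ j, 1 ≤ n j)
    (havoid : ∀ j, ∀ k : ℕ, 1 ≤ k → n j ≠ ⌊(2 : ℝ) ^ ((k : ℝ) / α)⌋₊)
    (ξ : ℕ → ℝ)
    (hξ : ∀ m : ℕ, 1 ≤ m → ξ m =
      (1/2) * (m : ℝ) ^ (-α) * (1 + (2 : ℝ) ^ Int.fract (α * Real.logb 2 (m : ℝ)))) :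
    (∀ j, ⌊α * Real.logb 2 (n j : ℝ)⌋ = ⌊α * Real.logb 2 ((n j : ℝ) + 1)⌋) ∧
    Filter.Tendsto
      (fun j => Int.fract (α * Real.logb 2 (n j : ℝ)) - Int.fract (α * Real.logb 2 ((n j : ℝ) + 1)))
      Filter.atTop (nhds 0) ∧
    Filter.Tendsto
      (fun j => (1 + (2 : ℝ) ^ Int.fract (α * Real.logb 2 (n j : ℝ))) /
        (1 + (2 : ℝ) ^ Int.fract (α * Real.logb 2 ((n j : ℝ) + 1))))
      Filter.atTop (nhds 1) ∧
    Filter.Tendsto (fun j => ξ (n j) / ξ (n j + 1)) Filter.atTop (nhds 1) := by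
  have hn0 : ∀ j, (0:ℝ) < (n j : ℝ) := fun j => by exact_mod_cast hpos j
  have hn1 : ∀ j, (1:ℝ) ≤ (n j : ℝ) := fun j => by exact_mod_cast hpos j
  -- Part 1: floors are equal
  have hfloor : ∀ j, ⌊α * Real.logb 2 (n j : ℝ)⌋ = ⌊α * Real.logb 2 ((n j : ℝ) + 1)⌋ := by
    intro j
    by_contra hne
    set x := α * Real.logb 2 (n j : ℝ) with hxdef
    set y := α * Real.logb 2 ((n j : ℝ) + 1) with hydef
    have hx0 : 0 ≤ x := mul_nonneg hα0.le (Real.logb_nonneg one_lt_two (hn1 j))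
    have hxy : x ≤ y := by
      have := Real.logb_le_logb_of_le (b := 2) one_lt_two (hn0 j) (by linarith : (n j : ℝ) ≤ (n j : ℝ) + 1)
      exact mul_le_mul_of_nonneg_left this hα0.le
    have hlt : ⌊x⌋ < ⌊y⌋ := lt_of_le_of_ne (Int.floor_le_floor hxy) hne
    have hfx0 : 0 ≤ ⌊x⌋ := Int.floor_nonneg.2 hx0
    set k : ℕ := ⌊y⌋.toNat with hkdef
    have hkcast : (k:ℤ) = ⌊y⌋ := Int.toNat_of_nonneg (by omega)
    have hk1' : 1 ≤ k := by omega
    have hxk : x < (k:ℝ) := by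
      have h1 : x < (⌊x⌋ : ℝ) + 1 := Int.lt_floor_add_one x
      have h2 : (⌊x⌋ : ℝ) + 1 ≤ (⌊y⌋ : ℝ) := by exact_mod_cast hlt
      have : ((k:ℤ) : ℝ) = ((⌊y⌋ : ℤ) : ℝ) := by exact_mod_cast hkcast
      push_cast at this ⊢
      linarith
    have hky : (k:ℝ) ≤ y := by
      have := Int.floor_le y
      have h : ((k:ℤ) : ℝ) = ((⌊y⌋ : ℤ) : ℝ) := by exact_mod_cast hkcast
      push_cast at h
      linarith
    -- n j < 2^{k/α}
    have h1 : (n j : ℝ) < 2 ^ ((k:ℝ)/α) := by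
      have hlog : Real.logb 2 (n j : ℝ) < (k:ℝ)/α := by
        rw [lt_div_iff₀ hα0, mul_comm]
        exact hxk
      calc (n j : ℝ) = (2:ℝ) ^ Real.logb 2 (n j : ℝ) :=
            (Real.rpow_logb two_pos one_lt_two.ne' (hn0 j)).symm
        _ < (2:ℝ) ^ ((k:ℝ)/α) :=
            (Real.rpow_lt_rpow_left_iff one_lt_two).2 hlog
    have h2 : (2:ℝ) ^ ((k:ℝ)/α) ≤ (n j : ℝ) + 1 := by
      have hlog : (k:ℝ)/α ≤ Real.logb 2 ((n j : ℝ) + 1) := by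
        rw [div_le_iff₀ hα0, mul_comm]
        exact hky
      calc (2:ℝ) ^ ((k:ℝ)/α) ≤ (2:ℝ) ^ Real.logb 2 ((n j : ℝ) + 1) :=
            (Real.rpow_le_rpow_left_iff one_lt_two).2 hlog
        _ = (n j : ℝ) + 1 := Real.rpow_logb two_pos one_lt_two.ne' (by linarith [hn0 j])
    have h3 : (2:ℝ) ^ ((k:ℝ)/α) < (n j : ℝ) + 1 := by
      rcases lt_or_eq_of_le h2 with h | h
      · exact h
      · exact absurd ⟨(n j : ℤ) + 1, by push_cast; linarith⟩ (hnotint k hk1')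
    refine havoid j k hk1' ?_
    symm
    rw [Nat.floor_eq_iff (by positivity)]
    exact ⟨h1.le, by push_cast; linarith⟩
  refine ⟨hfloor, ?_⟩
  -- abbreviations
  set a : ℕ → ℝ := fun j => Int.fract (α * Real.logb 2 (n j : ℝ)) with hadef
  set b : ℕ → ℝ := fun j => Int.fract (α * Real.logb 2 ((n j : ℝ) + 1)) with hbdef
  set L : ℕ → ℝ := fun j => α * Real.logb 2 (n j : ℝ) - α * Real.logb 2 ((n j : ℝ) + 1)
    with hLdef
  have hab : ∀ j, a j - b j = L j := by
    intro j
    simp only [hadef, hbdef, hLdef, Int.fract, hfloor j]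
    ring
  -- n j → ∞
  have hnat : Filter.Tendsto (fun j => (n j : ℝ)) Filter.atTop Filter.atTop :=
    tendsto_natCast_atTop_atTop.comp hmono.tendsto_atTop
  -- L → 0
  have hplus : Filter.Tendsto (fun j => (n j : ℝ) + 1) Filter.atTop Filter.atTop :=
    tendsto_atTop_add_const_right _ 1 hnat
  have hLz : Filter.Tendsto L Filter.atTop (nhds 0) := by
    have hinv : Filter.Tendsto (fun j => ((n j : ℝ) + 1)⁻¹) Filter.atTop (nhds 0) :=
      tendsto_inv_atTop_zero.comp hplus
    have ht : Filter.Tendsto (fun j => (n j : ℝ) / ((n j : ℝ) + 1)) Filter.atTop (nhds 1) := by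
      have h1 := hinv.const_sub (1:ℝ)
      rw [sub_zero] at h1
      refine h1.congr fun j => ?_
      have h2 : (n j : ℝ) + 1 ≠ 0 := by positivity
      field_simp
      ring
    have hlog1 : Filter.Tendsto (fun j => Real.log ((n j : ℝ) / ((n j : ℝ) + 1)))
        Filter.atTop (nhds 0) := by
      have := (Real.continuousAt_log one_ne_zero).tendsto.comp ht
      simpa [Function.comp_def] using this
    have := hlog1.const_mul (α / Real.log 2)
    rw [mul_zero] at this
    refine this.congr fun j => ?_
    have h2 : (n j : ℝ) ≠ 0 := (hn0 j).ne'
    have h3 : (n j : ℝ) + 1 ≠ 0 := by positivity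
    simp only [hLdef]
    rw [Real.log_div h2 h3, Real.logb, Real.logb]
    field_simp
  -- Part 2: fract difference → 0
  have hfr : Filter.Tendsto (fun j => a j - b j) Filter.atTop (nhds 0) :=
    hLz.congr fun j => (hab j).symm
  refine ⟨hfr, ?_⟩
  -- 2^L → 1
  have h2L : Filter.Tendsto (fun j => (2:ℝ) ^ (L j)) Filter.atTop (nhds 1) := by
    have := (Real.continuousAt_const_rpow (a := (2:ℝ)) (b := 0) two_ne_zero).tendsto.comp hLz
    simpa [Function.comp_def] using this
  -- Part 3: the ratio tends to 1
  have hbpos : ∀ j, (0:ℝ) < (2:ℝ) ^ (b j) := fun j => Real.rpow_pos_of_pos two_pos _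
  have hblt : ∀ j, (2:ℝ) ^ (b j) ≤ 2 := by
    intro j
    calc (2:ℝ) ^ (b j) ≤ (2:ℝ) ^ (1:ℝ) :=
          Real.rpow_le_rpow_of_exponent_le one_le_two (Int.fract_lt_one _).le
      _ = 2 := Real.rpow_one 2
  set R : ℕ → ℝ := fun j => (1 + (2:ℝ) ^ (a j)) / (1 + (2:ℝ) ^ (b j)) with hRdef
  have hRsub : ∀ j, |R j - 1| ≤ |(2:ℝ) ^ (L j) - 1| := by
    intro j
    have hb := hbpos j
    have h1b : (0:ℝ) < 1 + (2:ℝ) ^ (b j) := by linarith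
    have ha2 : (2:ℝ) ^ (a j) = (2:ℝ) ^ (b j) * (2:ℝ) ^ (L j) := by
      rw [← Real.rpow_add two_pos]
      congr 1
      have := hab j
      linarith
    have hval : R j - 1 = (2:ℝ) ^ (b j) * ((2:ℝ) ^ (L j) - 1) / (1 + (2:ℝ) ^ (b j)) := by
      rw [hRdef]
      field_simp
      rw [ha2]; ring
    rw [hval, abs_div, abs_of_pos h1b, abs_mul, abs_of_pos hb, div_le_iff₀ h1b]
    nlinarith [abs_nonneg ((2:ℝ) ^ (L j) - 1)]
  have hR : Filter.Tendsto R Filter.atTop (nhds 1) := by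
    rw [← tendsto_sub_nhds_zero_iff]
    have hg : Filter.Tendsto (fun j => |(2:ℝ) ^ (L j) - 1|) Filter.atTop (nhds 0) := by
      have := (h2L.sub_const 1).abs
      simpa using this
    have habs : Filter.Tendsto (fun j => |R j - 1|) Filter.atTop (nhds 0) :=
      squeeze_zero (fun j => abs_nonneg _) hRsub hg
    exact tendsto_zero_iff_abs_tendsto_zero (fun j => R j - 1) |>.mpr habs
  refine ⟨hR, ?_⟩
  -- Part 4: ξ ratio
  set F : ℕ → ℝ := fun j => (((n j : ℝ) + 1) / (n j : ℝ)) ^ α with hFdef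
  have hF : Filter.Tendsto F Filter.atTop (nhds 1) := by
    have ht : Filter.Tendsto (fun j => ((n j : ℝ) + 1) / (n j : ℝ)) Filter.atTop (nhds 1) := by
      have hinv : Filter.Tendsto (fun j => ((n j : ℝ))⁻¹) Filter.atTop (nhds 0) :=
        tendsto_inv_atTop_zero.comp hnat
      have h1 := hinv.const_add (1:ℝ)
      rw [add_zero] at h1
      refine h1.congr fun j => ?_
      have h2 : (n j : ℝ) ≠ 0 := (hn0 j).ne'
      field_simp
    have hc : ContinuousAt (fun x : ℝ => x ^ α) 1 :=
      Real.continuousAt_rpow_const 1 α (Or.inl one_ne_zero)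
    have := hc.tendsto.comp ht
    simpa [Function.comp_def, hFdef] using this
  have := hF.mul hR
  rw [mul_one] at this
  refine this.congr fun j => ?_
  have h2 : (0:ℝ) < (n j : ℝ) := hn0 j
  have h3 : (0:ℝ) < (n j : ℝ) + 1 := by linarith
  have hcast : ((n j + 1 : ℕ) : ℝ) = (n j : ℝ) + 1 := by push_cast; ring
  rw [hξ (n j) (hpos j), hξ (n j + 1) (by omega), hcast]
  have hrn : ((n j : ℝ)) ^ (-α) = ((n j : ℝ) ^ α)⁻¹ := by
    rw [Real.rpow_neg h2.le]
  have hrn1 : ((n j : ℝ) + 1) ^ (-α) = (((n j : ℝ) + 1) ^ α)⁻¹ := by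
    rw [Real.rpow_neg h3.le]
  have hpα : (0:ℝ) < (n j : ℝ) ^ α := Real.rpow_pos_of_pos h2 _
  have hpα1 : (0:ℝ) < ((n j : ℝ) + 1) ^ α := Real.rpow_pos_of_pos h3 _
  have hdiv : F j = ((n j : ℝ) + 1) ^ α / (n j : ℝ) ^ α := by
    rw [hFdef]
    exact Real.div_rpow h3.le h2.le α
  have h1a : (0:ℝ) < 1 + (2:ℝ) ^ (a j) := by positivity
  have h1b : (0:ℝ) < 1 + (2:ℝ) ^ (b j) := by positivity
  rw [hrn, hrn1, hdiv]
  simp only [hRdef, hadef, hbdef]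
  field_simp
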